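/- Let d ≥ 1 and let G be a locally finite simple graph on a vertex set V that is bipartite and d-regular. Then G has a perfect matching. -/

import Mathlib

open Set Function Finset

/-- Schröder–Bernstein, with the extra information that the bijection is pieced
together from `f` and `g⁻¹`. -/
theorem csb_rel_aux {α : Type*} {β : Type*} {f : α → β} {g : β → α}
    (hf : Function.Injective f) (hg : Function.Injective g) :
    ∃ h : α → β, Function.Bijective h ∧ ∀ a, h a = f a ∨ g (h a) = a := by
  classical
  cases' isEmpty_or_nonempty β with hβ hβ
  · exact ⟨f, ⟨hf, fun b => isEmptyElim b⟩, fun a => Or.inl rfl⟩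
  set F : Set α →o Set α :=
    { toFun := fun s => (g '' (f '' s)ᶜ)ᶜ
      monotone' := fun s t hst =>
        compl_subset_compl.mpr <| image_mono <| compl_subset_compl.mpr <| image_mono hst }
  set s : Set α := F.lfp
  have hs : (g '' (f '' s)ᶜ)ᶜ = s := F.map_lfp
  have hns : g '' (f '' s)ᶜ = sᶜ := compl_injective (by simp [hs])
  set g' := invFun g
  have g'g : LeftInverse g' g := leftInverse_invFun hg
  have hg'ns : g' '' sᶜ = (f '' s)ᶜ := by rw [← hns, g'g.image_image]
  set h : α → β := s.piecewise f g'
  have hsurj : Surjective h := by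
    rw [← range_eq_univ, s.range_piecewise, hg'ns, union_compl_self]
  have hinj : Injective h := by
    refine (injective_piecewise_iff _).2 ⟨hf.injOn, ?_, ?_⟩
    · intro x hx y hy hxy
      obtain ⟨x', _, rfl⟩ : x ∈ g '' (f '' s)ᶜ := by rwa [hns]
      obtain ⟨y', _, rfl⟩ : y ∈ g '' (f '' s)ᶜ := by rwa [hns]
      rw [g'g _, g'g _] at hxy
      rw [hxy]
    · intro x hx y hy hxy
      obtain ⟨y', hy', rfl⟩ : y ∈ g '' (f '' s)ᶜ := by rwa [hns]
      rw [g'g _] at hxy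
      exact hy' ⟨x, hx, hxy⟩
  refine ⟨h, ⟨hinj, hsurj⟩, fun a => ?_⟩
  by_cases ha : a ∈ s
  · exact Or.inl (s.piecewise_eq_of_mem f g' ha)
  · obtain ⟨b, _, rfl⟩ : a ∈ g '' (f '' s)ᶜ := by rwa [hns]
    right
    have hb : h (g b) = g' (g b) := s.piecewise_eq_of_notMem f g' ha
    rw [hb, g'g b]

/-- Hall's condition holds in a `d`-regular graph. -/
theorem regular_hall_cond {V : Type*} [DecidableEq V] (G : SimpleGraph V) [G.LocallyFinite]
    {d : ℕ} (hd : 1 ≤ d) (hreg : G.IsRegularOfDegree d) (S : Finset V) :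
    S.card ≤ (S.biUnion (fun v => G.neighborFinset v)).card := by
  classical
  set T := S.biUnion (fun v => G.neighborFinset v) with hT
  have key : S.card * d ≤ T.card * d := by
    calc S.card * d = ∑ a ∈ S, (G.neighborFinset a).card := by
          simp [SimpleGraph.card_neighborFinset_eq_degree, hreg _, Finset.sum_const, mul_comm]
      _ = ∑ a ∈ S, (T.filter (fun b => G.Adj a b)).card := by
          refine Finset.sum_congr rfl fun a ha => ?_
          congr 1
          ext b
          simp only [Finset.mem_filter, SimpleGraph.mem_neighborFinset, hT,
            Finset.mem_biUnion]
          exact ⟨fun hb => ⟨⟨a, ha, by simpa [SimpleGraph.mem_neighborFinset]⟩, hb⟩,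
            fun hb => hb.2⟩
      _ = ∑ a ∈ S, ∑ b ∈ T, if G.Adj a b then 1 else 0 :=
          Finset.sum_congr rfl fun a _ => Finset.card_filter _ _
      _ = ∑ b ∈ T, ∑ a ∈ S, if G.Adj a b then 1 else 0 := Finset.sum_comm
      _ = ∑ b ∈ T, (S.filter (fun a => G.Adj a b)).card :=
          Finset.sum_congr rfl fun b _ => (Finset.card_filter _ _).symm
      _ ≤ ∑ b ∈ T, d := by
          refine Finset.sum_le_sum fun b _ => ?_
          have hsub : S.filter (fun a => G.Adj a b) ⊆ G.neighborFinset b := by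
            intro a ha
            simp only [Finset.mem_filter] at ha
            simp [SimpleGraph.mem_neighborFinset, ha.2.symm]
          calc (S.filter (fun a => G.Adj a b)).card ≤ (G.neighborFinset b).card :=
                Finset.card_le_card hsub
            _ = d := by rw [SimpleGraph.card_neighborFinset_eq_degree]; exact hreg b
      _ = T.card * d := by simp [mul_comm]
  exact Nat.le_of_mul_le_mul_right key hd

/-- Every locally finite bipartite `d`-regular simple graph (`d ≥ 1`)
has a perfect matching. -/
theorem bipartite_regular_has_perfect_matching {V : Type*} (G : SimpleGraph V)
    [G.LocallyFinite] (d : ℕ) (hd : 1 ≤ d) (hbip : G.Colorable 2)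
    (hreg : G.IsRegularOfDegree d) :
    ∃ M : G.Subgraph, M.IsPerfectMatching := by
  classical
  obtain ⟨c⟩ := hbip
  obtain ⟨f, hfinj, hft⟩ :=
    (Finset.all_card_le_biUnion_card_iff_exists_injective (fun v => G.neighborFinset v)).mp
      (regular_hall_cond G hd hreg)
  have hadj : ∀ v, G.Adj v (f v) := fun v => by
    have := hft v; rwa [SimpleGraph.mem_neighborFinset] at this
  have fin2 : ∀ i : Fin 2, i = 0 ∨ i = 1 := by decide
  -- colors of f
  have hc0 : ∀ v : V, c v = 0 → c (f v) = 1 := fun v hv => by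
    have := c.valid (hadj v)
    rcases fin2 (c (f v)) with h | h
    · exact absurd (hv.trans h.symm) this
    · exact h
  have hc1 : ∀ v : V, c v = 1 → c (f v) = 0 := fun v hv => by
    have := c.valid (hadj v)
    rcases fin2 (c (f v)) with h | h
    · exact h
    · exact absurd (hv.trans h.symm) this
  set A := {v : V // c v = 0}
  set B := {v : V // c v = 1}
  set fA : A → B := fun a => ⟨f a.1, hc0 a.1 a.2⟩ with hfA
  set fB : B → A := fun b => ⟨f b.1, hc1 b.1 b.2⟩ with hfB
  have hfAinj : Function.Injective fA := fun a a' h =>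
    Subtype.ext (hfinj (congrArg Subtype.val h))
  have hfBinj : Function.Injective fB := fun b b' h =>
    Subtype.ext (hfinj (congrArg Subtype.val h))
  obtain ⟨h, hbij, hrel⟩ := csb_rel_aux hfAinj hfBinj
  have hAadj : ∀ a : A, G.Adj a.1 (h a).1 := by
    intro a
    rcases hrel a with heq | heq
    · rw [heq]; exact hadj a.1
    · have : f (h a).1 = a.1 := congrArg Subtype.val heq
      rw [← this]; exact (hadj (h a).1).symm
  refine ⟨{ verts := Set.univ
            Adj := fun x y =>
              (∃ (hx : c x = 0) (hy : c y = 1), h ⟨x, hx⟩ = ⟨y, hy⟩) ∨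
              (∃ (hy : c y = 0) (hx : c x = 1), h ⟨y, hy⟩ = ⟨x, hx⟩)
            adj_sub := ?_
            edge_vert := fun _ => Set.mem_univ _
            symm := ⟨fun x y hxy => hxy.elim (fun h' => Or.inr h') (fun h' => Or.inl h')⟩ },
        ?_, fun v => Set.mem_univ v⟩
  · rintro x y (⟨hx, hy, heq⟩ | ⟨hy, hx, heq⟩)
    · have := hAadj ⟨x, hx⟩
      rwa [heq] at this
    · have := hAadj ⟨y, hy⟩
      rw [heq] at this
      exact this.symm
  · intro v _
    rcases fin2 (c v) with hv | hv
    · refine ⟨(h ⟨v, hv⟩).1, Or.inl ⟨hv, (h ⟨v, hv⟩).2, rfl⟩, ?_⟩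
      rintro w (⟨hx, hy, heq⟩ | ⟨hy, hx, heq⟩)
      · exact (congrArg Subtype.val heq).symm
      · exact absurd (hv.symm.trans hx) (by decide)
    · obtain ⟨a, ha⟩ := hbij.2 ⟨v, hv⟩
      refine ⟨a.1, Or.inr ⟨a.2, hv, by rw [Subtype.ext_iff] at ha ⊢; simpa using ha⟩, ?_⟩
      rintro w (⟨hx, hy, heq⟩ | ⟨hy, hx, heq⟩)
      · exact absurd (hv.symm.trans hx) (by decide)
      · have : h ⟨w, hy⟩ = h a := by
          rw [heq, ha]
        exact congrArg Subtype.val (hbij.1 this)
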